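/- Let G be a 2-vertex-connected undirected graph that contains at least one odd cycle. Then every edge of G belongs to some odd cycle. -/

import Mathlib

open Finset

variable {V : Type*} [DecidableEq V] [Fintype V]

/-- The edge set of a (simple) cycle in `G`. -/
def IsCycleEdges (G : SimpleGraph V) (s : Finset (Sym2 V)) : Prop :=
  ∃ (u : V) (c : G.Walk u u), c.IsCycle ∧ c.edges.toFinset = s

/-- A graph is 2-vertex-connected: it has at least 3 vertices and deleting any single
vertex leaves a connected graph. -/
def TwoConnected (G : SimpleGraph V) : Prop :=
  3 ≤ Fintype.card V ∧ ∀ v : V, (G.induce {x | x ≠ v}).Connected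

namespace OddCycleAux

open SimpleGraph SimpleGraph.Walk

variable {G : SimpleGraph V}

/-- First-hit trimming: from a walk ending in `S`, extract a prefix walk that meets `S`
only at its final vertex. -/
lemma exists_firstHit {w s : V} (R : G.Walk w s) (S : Set V) (hs : s ∈ S) :
    ∃ (q : V) (Q : G.Walk w q), q ∈ S ∧ (∀ x ∈ Q.support, x ∈ S → x = q) ∧
      Q.support ⊆ R.support ∧ Q.edges ⊆ R.edges ∧ (R.IsPath → Q.IsPath) := by
  induction R with
  | nil =>
    exact ⟨_, Walk.nil, hs, by simp, by simp, by simp, fun _ => IsPath.nil⟩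
  | @cons a b c h R ih =>
    by_cases haS : a ∈ S
    · exact ⟨a, Walk.nil, haS, by simp, by simp, by simp, fun _ => IsPath.nil⟩
    · obtain ⟨q, Q, hq, hfirst, hsup, hedg, hpath⟩ := ih hs
      refine ⟨q, Walk.cons h Q, hq, ?_, ?_, ?_, ?_⟩
      · intro x hx hxS
        rw [support_cons, List.mem_cons] at hx
        rcases hx with rfl | hx
        · exact absurd hxS haS
        · exact hfirst x hx hxS
      · intro x hx
        rw [support_cons, List.mem_cons] at hx ⊢
        exact hx.imp id (fun h' => hsup h')
      · intro x hx
        rw [edges_cons, List.mem_cons] at hx ⊢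
        exact hx.imp id (fun h' => hedg h')
      · intro hp
        rw [cons_isPath_iff] at hp ⊢
        exact ⟨hpath hp.1, fun hmem => hp.2 (hsup hmem)⟩

/-- The two arcs of a cycle between a vertex `q` on the cycle and the base vertex `v`. -/
lemma arc_pair {v q : V} (c : G.Walk v v) (hc : c.IsCycle) (hq : q ∈ c.support) (hne : q ≠ v) :
    ∃ (A B : G.Walk q v), A.IsPath ∧ B.IsPath ∧ A.length + B.length = c.length ∧
      A.support ⊆ c.support ∧ B.support ⊆ c.support ∧
      A.edges ⊆ c.edges ∧ B.edges ⊆ c.edges := by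
  cases c with
  | nil => exact absurd rfl hc.ne_nil
  | @cons _ x _ h p =>
    rw [Walk.cons_isCycle_iff] at hc
    have hp : p.IsPath := hc.1
    have hqp : q ∈ p.support := by
      rw [support_cons, List.mem_cons] at hq
      rcases hq with rfl | hq
      · exact absurd rfl hne
      · exact hq
    have hspec := p.take_spec hqp
    set A := p.dropUntil q hqp with hA
    set B' := p.takeUntil q hqp with hB'
    have hAp : A.IsPath := hp.dropUntil hqp
    have hB'p : B'.IsPath := hp.takeUntil hqp
    have hsupp : p.support = B'.support ++ A.support.tail := by
      conv_lhs => rw [← hspec]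
      rw [support_append]
    have hvA : v ∈ A.support.tail := by
      have hvAs : v ∈ A.support := A.end_mem_support
      rw [A.support_eq_cons, List.mem_cons] at hvAs
      rcases hvAs with rfl | hvAs
      · exact absurd rfl hne
      · exact hvAs
    have hvB' : v ∉ B'.support := by
      intro hvB
      have hnd : p.support.Nodup := hp.support_nodup
      rw [hsupp] at hnd
      exact (List.disjoint_of_nodup_append hnd) hvB hvA
    have hlenp : B'.length + A.length = p.length := by
      conv_rhs => rw [← hspec]
      rw [length_append]
    refine ⟨A, (Walk.cons h B').reverse, hAp, ?_, ?_, ?_, ?_, ?_, ?_⟩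
    · apply IsPath.reverse
      rw [cons_isPath_iff]
      exact ⟨hB'p, hvB'⟩
    · rw [length_reverse, length_cons]
      rw [length_cons]
      omega
    · intro z hz
      rw [support_cons, List.mem_cons]
      exact Or.inr (p.support_dropUntil_subset hqp hz)
    · intro z hz
      rw [support_reverse, List.mem_reverse, support_cons, List.mem_cons] at hz
      rw [support_cons, List.mem_cons]
      exact hz.imp id (fun h' => p.support_takeUntil_subset hqp h')
    · intro z hz
      rw [edges_cons, List.mem_cons]
      exact Or.inr (p.edges_dropUntil_subset hqp hz)
    · intro z hz
      rw [edges_reverse, List.mem_reverse, edges_cons, List.mem_cons] at hz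
      rw [edges_cons, List.mem_cons]
      exact hz.imp id (fun h' => p.edges_takeUntil_subset hqp h')

/-- Build an odd cycle through the edge `s(v,w)` from an even path from `w` to `v`
avoiding that edge. -/
lemma mk_cycle {v w : V} (hadj : G.Adj v w) (P : G.Walk w v) (hP : P.IsPath)
    (hPe : s(v, w) ∉ P.edges) (heven : Even P.length) :
    ∃ (u' : V) (c' : G.Walk u' u'), c'.IsCycle ∧ Odd c'.length ∧ s(v, w) ∈ c'.edges := by
  refine ⟨v, Walk.cons hadj P, ?_, ?_, ?_⟩
  · rw [Walk.cons_isCycle_iff]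
    exact ⟨hP, hPe⟩
  · rw [length_cons]
    exact heven.add_one
  · rw [edges_cons]
    exact List.mem_cons_self

/-- Base case: the endpoint `v` of the edge lies on an odd cycle based at `v`. -/
lemma base (h2 : TwoConnected G) {v w : V} (hadj : G.Adj v w) (c : G.Walk v v)
    (hc : c.IsCycle) (hco : Odd c.length) :
    ∃ (u' : V) (c' : G.Walk u' u'), c'.IsCycle ∧ Odd c'.length ∧ s(v, w) ∈ c'.edges := by
  by_cases hw : w ∈ c.support
  · by_cases he : s(v, w) ∈ c.edges
    · exact ⟨v, c, hc, hco, he⟩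
    · obtain ⟨A, B, hA, hB, hlen, _, _, hAe, hBe⟩ := arc_pair c hc hw hadj.ne'
      have hpar : Even A.length ∨ Even B.length := by
        rcases Nat.even_or_odd A.length with h1 | h1
        · exact Or.inl h1
        · right
          have : Odd (A.length + B.length) := hlen ▸ hco
          rw [Nat.odd_add] at this
          exact this.mp h1
      have hePe : ∀ (X : G.Walk w v), X.edges ⊆ c.edges → s(v, w) ∉ X.edges :=
        fun X hX hmem => he (hX hmem)
      rcases hpar with h1 | h1
      · exact mk_cycle hadj A hA (hePe A hAe) h1
      · exact mk_cycle hadj B hB (hePe B hBe) h1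
  · -- w is not on the cycle
    obtain ⟨y, hvy, hy⟩ : ∃ y, G.Adj v y ∧ y ∈ c.support := by
      cases c with
      | nil => exact absurd rfl hc.ne_nil
      | cons h' p =>
        exact ⟨_, h', by rw [support_cons]; exact List.mem_cons_of_mem _ p.start_mem_support⟩
    have hwv : w ≠ v := hadj.ne'
    have hyv : y ≠ v := hvy.ne'
    have hconn := h2.2 v
    obtain ⟨R0⟩ := hconn.preconnected ⟨w, hwv⟩ ⟨y, hyv⟩
    obtain ⟨R1, hR1path⟩ := R0.toPath
    set R : G.Walk w y :=
      Walk.map (SimpleGraph.Embedding.induce {x | x ≠ v}).toHom R1 with hRdef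
    have hRpath : R.IsPath := map_isPath_of_injective Subtype.val_injective hR1path
    have hvR : v ∉ R.support := by
      change v ∉ (Walk.map (SimpleGraph.Embedding.induce {x | x ≠ v}).toHom R1).support
      rw [Walk.support_map]
      rintro hmem
      rw [List.mem_map] at hmem
      obtain ⟨⟨x, hx⟩, _, hxv⟩ := hmem
      exact hx hxv
    obtain ⟨q, Q, hq, hfirst, hQsup, hQe, hQpath⟩ :=
      exists_firstHit R {x | x ∈ c.support} hy
    have hQp : Q.IsPath := hQpath hRpath
    have hvQ : v ∉ Q.support := fun h => hvR (hQsup h)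
    have hqv : q ≠ v := fun h => hvQ (h ▸ Q.end_mem_support)
    obtain ⟨A, B, hA, hB, hlen, hAs, hBs, hAe, hBe⟩ := arc_pair c hc hq hqv
    have hec : s(v, w) ∉ c.edges := fun h => hw (c.snd_mem_support_of_mem_edges h)
    -- choose the arc with the right parity
    have key : ∀ (X : G.Walk q v), X.IsPath → X.support ⊆ c.support → X.edges ⊆ c.edges →
        Even (Q.length + X.length) →
        ∃ (u' : V) (c' : G.Walk u' u'), c'.IsCycle ∧ Odd c'.length ∧ s(v, w) ∈ c'.edges := by
      intro X hX hXs hXe hpar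
      have hXnd : X.support.Nodup := hX.support_nodup
      have hqtail : q ∉ X.support.tail := by
        intro h
        have h2 := hXnd
        rw [X.support_eq_cons, List.nodup_cons] at h2
        exact h2.1 h
      have hdisj : Q.support.Disjoint X.support.tail := by
        intro a haQ haX
        have haXs : a ∈ X.support := by
          rw [X.support_eq_cons]; exact List.mem_cons_of_mem _ haX
        have : a = q := hfirst a haQ (hXs haXs)
        exact hqtail (this ▸ haX)
      have hPpath : (Q.append X).IsPath := by
        rw [isPath_def, support_append]
        exact List.Nodup.append hQp.support_nodup (hXnd.sublist (List.tail_sublist _)) hdisj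
      have hPlen : Even (Q.append X).length := by rw [length_append]; exact hpar
      have hPe : s(v, w) ∉ (Q.append X).edges := by
        rw [edges_append, List.mem_append]
        rintro (h | h)
        · exact hvQ (Q.fst_mem_support_of_mem_edges h)
        · exact hec (hXe h)
      exact mk_cycle hadj (Q.append X) hPpath hPe hPlen
    rcases Nat.even_or_odd (Q.length + A.length) with h1 | h1
    · exact key A hA hAs hAe h1
    · refine key B hB hBs hBe ?_
      have h2' : Odd (A.length + B.length) := hlen ▸ hco
      rw [Nat.odd_iff] at h1 h2'
      rw [Nat.even_iff]
      omega

lemma tc_connected (h2 : TwoConnected G) : G.Connected := by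
  have hcard := h2.1
  have hne : Nonempty V := by
    rw [← Fintype.card_pos_iff]; omega
  rw [connected_iff]
  refine ⟨fun x y => ?_, hne⟩
  have hz : ∃ z, z ≠ x ∧ z ≠ y := by
    by_contra h
    push_neg at h
    have hsub : (Finset.univ : Finset V) ⊆ {x, y} := by
      intro z _
      rcases eq_or_ne z x with rfl | hzx
      · simp
      · have := h z hzx
        simp [this]
    have := Finset.card_le_card hsub
    have hxy : ({x, y} : Finset V).card ≤ 2 := Finset.card_insert_le _ _ |>.trans (by simp)
    rw [Finset.card_univ] at this
    omega
  obtain ⟨z, hzx, hzy⟩ := hz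
  obtain ⟨R0⟩ := (h2.2 z).preconnected ⟨x, hzx.symm⟩ ⟨y, hzy.symm⟩
  exact ⟨Walk.map (SimpleGraph.Embedding.induce {t | t ≠ z}).toHom R0⟩

lemma reach (h2 : TwoConnected G) : ∀ (n : ℕ) {v w : V}, G.Adj v w → ∀ {u : V}
    (c : G.Walk u u), c.IsCycle → Odd c.length → ∀ (W : G.Walk v u), W.length = n →
    ∃ (u' : V) (c' : G.Walk u' u'), c'.IsCycle ∧ Odd c'.length ∧ s(v, w) ∈ c'.edges := by
  intro n
  induction n with
  | zero =>
    intro v w hadj u c hc hco W hW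
    cases W with
    | nil => exact base h2 hadj c hc hco
    | cons h W' => simp [length_cons] at hW
  | succ n ih =>
    intro v w hadj u c hc hco W hW
    by_cases hv : v ∈ c.support
    · have hc' := hc.rotate hv
      have hlen : (c.rotate _ hv).length = c.length := by
        rw [← length_edges, ← length_edges, (c.rotate_edges _ hv).perm.length_eq]
      exact base h2 hadj (c.rotate _ hv) hc' (hlen ▸ hco)
    · cases W with
      | nil => exact absurd c.start_mem_support hv
      | @cons _ v₂ _ h W' =>
        have hW' : W'.length = n := by
          rw [length_cons] at hW; omega
        obtain ⟨u', c', hc', hco', he'⟩ := ih h.symm c hc hco W' hW'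
        have hv' : v ∈ c'.support := c'.snd_mem_support_of_mem_edges he'
        have hcr := hc'.rotate hv'
        have hlen : (c'.rotate _ hv').length = c'.length := by
          rw [← length_edges, ← length_edges, (c'.rotate_edges _ hv').perm.length_eq]
        exact base h2 hadj (c'.rotate _ hv') hcr (hlen ▸ hco')

end OddCycleAux

/-- In a 2-vertex-connected graph that contains an odd cycle, every edge belongs to
some odd cycle. -/
theorem every_edge_in_odd_cycle (G : SimpleGraph V) (h2 : TwoConnected G)
    (hodd : ∃ s : Finset (Sym2 V), IsCycleEdges G s ∧ Odd s.card) :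
    ∀ e ∈ G.edgeSet, ∃ s : Finset (Sym2 V), IsCycleEdges G s ∧ Odd s.card ∧ e ∈ s := by
  classical
  obtain ⟨s, ⟨u, c, hc, hs⟩, hodds⟩ := hodd
  have hnodup : c.edges.Nodup := hc.isCircuit.isTrail.edges_nodup
  have hco : Odd c.length := by
    rwa [← hs, List.toFinset_card_of_nodup hnodup, SimpleGraph.Walk.length_edges] at hodds
  intro e he
  induction e using Sym2.ind with
  | _ v w =>
    have hadj : G.Adj v w := (G.mem_edgeSet).mp he
    have hconn := OddCycleAux.tc_connected h2
    obtain ⟨W⟩ := hconn.preconnected v u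
    obtain ⟨u', c', hc', hco', he'⟩ := OddCycleAux.reach h2 W.length hadj c hc hco W rfl
    refine ⟨c'.edges.toFinset, ⟨u', c', hc', rfl⟩, ?_, List.mem_toFinset.mpr he'⟩
    rwa [List.toFinset_card_of_nodup hc'.isCircuit.isTrail.edges_nodup,
      SimpleGraph.Walk.length_edges]
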